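/- Under the paired matrix Gaussian model, for all 1 ≤ i, j ≤ p, E[(nq)^{-1} Σ_{k=1}^n Σ_{l=1}^q ε^{(1)}_{k,i,l} ε^{(2)}_{k,j,l}] = (r^{(1)}_{i,i} r^{(2)}_{j,j})^{1/2} · ρ_{S_{1,2},i,j} · tr(P_{T_{1,2}})/q. -/

import Mathlib

open Filter Matrix
open scoped BigOperators ENNReal

noncomputable section

/-- A family of real random variables is centered jointly Gaussian with covariance matrix `C`
if every linear combination has the centered one-dimensional Gaussian law with the
corresponding variance. -/
def IsCenteredGaussianFamily {Ω : Type*} [MeasurableSpace Ω] (μ : MeasureTheory.Measure Ω)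
    {ι : Type*} [Fintype ι] (Z : ι → Ω → ℝ) (C : Matrix ι ι ℝ) : Prop :=
  ∀ a : ι → ℝ,
    μ.map (fun ω => ∑ i, a i * Z i ω)
      = ProbabilityTheory.gaussianReal 0 (Real.toNNReal (∑ i, ∑ j, a i * C i j * a j))

/-- The covariance matrix of the stacked vector `(vec X⁽¹⁾, vec X⁽²⁾)` in the paired
matrix Gaussian model, with diagonal blocks `Σ_{S_t} ⊗ Σ_{T_t}` and off-diagonal blocks
`Σ_{S_{1,2}} ⊗ Σ_{T_{1,2}}` (and its transpose). -/
def pairCov {p q : ℕ} (S1 S2 S12 : Matrix (Fin p) (Fin p) ℝ)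
    (T1 T2 T12 : Matrix (Fin q) (Fin q) ℝ) :
    Matrix (Fin 2 × Fin p × Fin q) (Fin 2 × Fin p × Fin q) ℝ :=
  Matrix.of fun a b =>
    if a.1 = 0 then
      (if b.1 = 0 then S1 a.2.1 b.2.1 * T1 a.2.2 b.2.2
       else S12 a.2.1 b.2.1 * T12 a.2.2 b.2.2)
    else
      (if b.1 = 0 then S12 b.2.1 a.2.1 * T12 b.2.2 a.2.2
       else S2 a.2.1 b.2.1 * T2 a.2.2 b.2.2)

/-- Covariance of two real random variables. -/
def cov {Ω : Type*} [MeasurableSpace Ω] (μ : MeasureTheory.Measure Ω) (f g : Ω → ℝ) : ℝ :=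
  ∫ ω, (f ω - ∫ x, f x ∂μ) * (g ω - ∫ x, g x ∂μ) ∂μ

/-- Pearson correlation of two real random variables. -/
def corr {Ω : Type*} [MeasurableSpace Ω] (μ : MeasureTheory.Measure Ω) (f g : Ω → ℝ) : ℝ :=
  cov μ f g / Real.sqrt (ProbabilityTheory.variance f μ * ProbabilityTheory.variance g μ)

/-- Squared Frobenius norm of a matrix. -/
def frobSq {m : ℕ} (A : Matrix (Fin m) (Fin m) ℝ) : ℝ := ∑ i, ∑ j, (A i j) ^ 2

/-- Matrix 1-norm `max_j ∑_i |a_{i,j}|`. -/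
def L1norm {m : ℕ} (A : Matrix (Fin m) (Fin m) ℝ) : ℝ := ⨆ j, ∑ i, |A i j|

/-- Spectral (operator) norm of a matrix. -/
def specNorm {m : ℕ} (A : Matrix (Fin m) (Fin m) ℝ) : ℝ :=
  ⨆ v : {v : Fin m → ℝ // v ⬝ᵥ v ≤ 1}, Real.sqrt (A.mulVec v ⬝ᵥ A.mulVec v)

/-- Standard normal cumulative distribution function. -/
def Phi (x : ℝ) : ℝ := ((ProbabilityTheory.gaussianReal 0 1) (Set.Iic x)).toReal

/-- The old Mathlib `Matrix.PosSemidef.sqrt` (removed since), with its old definition. -/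
def posSemidefSqrt {n : Type*} [Fintype n] [DecidableEq n] {A : Matrix n n ℝ}
    (hA : A.PosSemidef) : Matrix n n ℝ :=
  hA.1.eigenvectorUnitary.1 * Matrix.diagonal ((↑) ∘ (√·) ∘ hA.1.eigenvalues) *
    (star hA.1.eigenvectorUnitary : Matrix n n ℝ)

/-- The paired matrix Gaussian model: `n` i.i.d. pairs of `p × q` random matrices whose
stacked vectors are centered Gaussian with separable (Kronecker) covariance structure. -/
structure PairedModel where
  n : ℕ
  p : ℕ
  q : ℕ
  npos : 0 < n
  ppos : 0 < p
  qpos : 0 < q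
  Ω : Type
  [mΩ : MeasurableSpace Ω]
  μ : MeasureTheory.Measure Ω
  probμ : MeasureTheory.IsProbabilityMeasure μ
  SigS : Fin 2 → Matrix (Fin p) (Fin p) ℝ
  SigT : Fin 2 → Matrix (Fin q) (Fin q) ℝ
  SigS12 : Matrix (Fin p) (Fin p) ℝ
  SigT12 : Matrix (Fin q) (Fin q) ℝ
  hSigS : ∀ t, (SigS t).PosDef
  hSigT : ∀ t, (SigT t).PosDef
  hSig : (pairCov (SigS 0) (SigS 1) SigS12 (SigT 0) (SigT 1) SigT12).PosSemidef
  X : Fin n → Fin 2 → Ω → Matrix (Fin p) (Fin q) ℝ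
  measX : ∀ k t i l, Measurable fun ω => X k t ω i l
  gaussX : ∀ k, IsCenteredGaussianFamily μ
      (fun tl ω => X k tl.1 ω tl.2.1 tl.2.2)
      (pairCov (SigS 0) (SigS 1) SigS12 (SigT 0) (SigT 1) SigT12)
  iidX : ProbabilityTheory.iIndepFun
      (fun k ω (tl : Fin 2 × Fin p × Fin q) => X k tl.1 ω tl.2.1 tl.2.2) μ
  identX : ∀ k k' : Fin n, ProbabilityTheory.IdentDistrib
      (fun ω (tl : Fin 2 × Fin p × Fin q) => X k tl.1 ω tl.2.1 tl.2.2)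
      (fun ω (tl : Fin 2 × Fin p × Fin q) => X k' tl.1 ω tl.2.1 tl.2.2) μ μ

attribute [instance] PairedModel.mΩ PairedModel.probμ

namespace PairedModel

variable (M : PairedModel)

/-- `Σ_{T_t}^{-1/2}`. -/
def invSqrtT (t : Fin 2) : Matrix (Fin M.q) (Fin M.q) ℝ := (posSemidefSqrt (M.hSigT t).posSemidef)⁻¹

/-- `P_{T_{1,2}} = Σ_{T_1}^{-1/2} Σ_{T_{1,2}} Σ_{T_2}^{-1/2}`. -/
def PT12 : Matrix (Fin M.q) (Fin M.q) ℝ := M.invSqrtT 0 * M.SigT12 * M.invSqrtT 1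

/-- Spatial precision matrices `Ω_{S_t} = Σ_{S_t}⁻¹`. -/
def ΩS (t : Fin 2) : Matrix (Fin M.p) (Fin M.p) ℝ := (M.SigS t)⁻¹

/-- The whitened observations `Y_k^{(t)} = X_k^{(t)} Σ_{T_t}^{-1/2}`. -/
def Y (k : Fin M.n) (t : Fin 2) (ω : M.Ω) : Matrix (Fin M.p) (Fin M.q) ℝ :=
  M.X k t ω * M.invSqrtT t

/-- Population regression coefficients `β_i^{(t)}`, as `β^{(t)}_{i,j} = -ω_{S_t,i,j}/ω_{S_t,i,i}`
for `j ≠ i` (the value at `j = i` is irrelevant). -/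
def β (t : Fin 2) (i j : Fin M.p) : ℝ := -(M.ΩS t i j) / M.ΩS t i i

/-- Regression errors `ε^{(t)}_{k,i,l} = Y^{(t)}_{k,i,l} − Σ_{j ≠ i} β^{(t)}_{i,j} Y^{(t)}_{k,j,l}`. -/
def ε (k : Fin M.n) (t : Fin 2) (i : Fin M.p) (l : Fin M.q) (ω : M.Ω) : ℝ :=
  M.Y k t ω i l - ∑ j ∈ Finset.univ.erase i, M.β t i j * M.Y k t ω j l

/-- `r^{(t)}_{i,j} = ω_{S_t,i,j}/(ω_{S_t,i,i} ω_{S_t,j,j})`. -/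
def r (t : Fin 2) (i j : Fin M.p) : ℝ := M.ΩS t i j / (M.ΩS t i i * M.ΩS t j j)

/-- `ρ^{(t)}_{i,j} = r^{(t)}_{i,j}/(r^{(t)}_{i,i} r^{(t)}_{j,j})^{1/2}`. -/
def ρ (t : Fin 2) (i j : Fin M.p) : ℝ := M.r t i j / Real.sqrt (M.r t i i * M.r t j j)

/-- Partial correlations `ρ_{S_t,i,j} = ω_{S_t,i,j}/(ω_{S_t,i,i} ω_{S_t,j,j})^{1/2}`. -/
def ρS (t : Fin 2) (i j : Fin M.p) : ℝ :=
  M.ΩS t i j / Real.sqrt (M.ΩS t i i * M.ΩS t j j)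

/-- `U^{(t)}_{i,j}`. -/
def U (t : Fin 2) (i j : Fin M.p) (ω : M.Ω) : ℝ :=
  (1 / (M.n * M.q : ℝ)) * ∑ k, ∑ l,
    (M.ε k t i l ω * M.ε k t j l ω - ∫ ω', M.ε k t i l ω' * M.ε k t j l ω' ∂M.μ)

/-- `Ũ^{(t)}_{i,j} = (r^{(t)}_{i,j} − U^{(t)}_{i,j})/(r^{(t)}_{i,i} r^{(t)}_{j,j})^{1/2}`. -/
def Utilde (t : Fin 2) (i j : Fin M.p) (ω : M.Ω) : ℝ :=
  (M.r t i j - M.U t i j ω) / Real.sqrt (M.r t i i * M.r t j j)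

/-- `θ^{(t)}_{i,j} = Var(Ũ^{(t)}_{i,j})`. -/
def θ (t : Fin 2) (i j : Fin M.p) : ℝ := ProbabilityTheory.variance (M.Utilde t i j) M.μ

/-- `Θ_{i,j} = Var(Ũ^{(1)}_{i,j} − Ũ^{(2)}_{i,j})`. -/
def Θ (i j : Fin M.p) : ℝ :=
  ProbabilityTheory.variance (fun ω => M.Utilde 0 i j ω - M.Utilde 1 i j ω) M.μ

/-- `ρ_{S_{1,2},i,j} = (r^{(1)}_{i,i} r^{(2)}_{j,j})^{1/2} · Ω_{S_1,i,·} Σ_{S_{1,2}} Ω_{S_2,·,j}`. -/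
def ρS12 (i j : Fin M.p) : ℝ :=
  Real.sqrt (M.r 0 i i * M.r 1 j j) * ∑ a, ∑ b, M.ΩS 0 i a * M.SigS12 a b * M.ΩS 1 b j

/-- Assumption (A1), with constants `c0, c1, c2`: the eigenvalues of the spatial and temporal
precision matrices lie in `[c0⁻¹, c0]`; the scaled operator norms of `P_{T_{1,2}}` and
`Σ_{S_{1,2}}` are bounded by `c1`; and `|tr(P_{T_{1,2}}) tr(Σ_{S_{1,2}})|/(pq) ≥ c2`. -/
def A1 (c0 c1 c2 : ℝ) : Prop :=
  (∀ t : Fin 2, ∀ v : Fin M.p → ℝ,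
      c0⁻¹ * (v ⬝ᵥ v) ≤ v ⬝ᵥ (M.ΩS t).mulVec v ∧ v ⬝ᵥ (M.ΩS t).mulVec v ≤ c0 * (v ⬝ᵥ v)) ∧
  (∀ t : Fin 2, ∀ v : Fin M.q → ℝ,
      c0⁻¹ * (v ⬝ᵥ v) ≤ v ⬝ᵥ ((M.SigT t)⁻¹).mulVec v ∧
        v ⬝ᵥ ((M.SigT t)⁻¹).mulVec v ≤ c0 * (v ⬝ᵥ v)) ∧
  (∀ v : Fin M.q → ℝ,
      |Matrix.trace M.SigS12| / M.p * Real.sqrt (M.PT12.mulVec v ⬝ᵥ M.PT12.mulVec v)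
        ≤ c1 * Real.sqrt (v ⬝ᵥ v)) ∧
  (∀ v : Fin M.p → ℝ,
      |Matrix.trace M.PT12| / M.q * Real.sqrt (M.SigS12.mulVec v ⬝ᵥ M.SigS12.mulVec v)
        ≤ c1 * Real.sqrt (v ⬝ᵥ v)) ∧
  c2 ≤ |Matrix.trace M.PT12 * Matrix.trace M.SigS12| / (M.p * M.q)

end PairedModel


namespace PairedModel

variable (M : PairedModel)

/-- Sample means `Ȳ^{(t)}_i` of the whitened data. -/
def Ybar (t : Fin 2) (i : Fin M.p) (ω : M.Ω) : ℝ :=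
  (1 / (M.n * M.q : ℝ)) * ∑ k, ∑ l, M.Y k t ω i l

/-- Residuals `ε̂^{(t)}_{k,i,l}` built from estimated regression coefficients `b`. -/
def εhat (b : Fin 2 → Fin M.p → M.Ω → Fin M.p → ℝ) (k : Fin M.n) (t : Fin 2)
    (i : Fin M.p) (l : Fin M.q) (ω : M.Ω) : ℝ :=
  M.Y k t ω i l - M.Ybar t i ω
    - ∑ j ∈ Finset.univ.erase i, b t i ω j * (M.Y k t ω j l - M.Ybar t j ω)

/-- `r̃^{(t)}_{i,j}`, the sample covariance of the residuals. -/
def rtil (b : Fin 2 → Fin M.p → M.Ω → Fin M.p → ℝ) (t : Fin 2) (i j : Fin M.p) (ω : M.Ω) : ℝ :=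
  (1 / (M.n * M.q : ℝ)) * ∑ k, ∑ l, M.εhat b k t i l ω * M.εhat b k t j l ω

/-- Bias-corrected estimator `r̂^{(t)}_{i,j}` (for `i = j` it is `r̃^{(t)}_{i,i}`, for `i ≠ j`
it is the bias-corrected formula, used for `i < j`). -/
def rhat (b : Fin 2 → Fin M.p → M.Ω → Fin M.p → ℝ) (t : Fin 2) (i j : Fin M.p) (ω : M.Ω) : ℝ :=
  if i = j then M.rtil b t i i ω
  else -(M.rtil b t i j ω + M.rtil b t i i ω * b t i ω j + M.rtil b t j j ω * b t j ω i)

/-- `θ̂^{(t)}_{i,j}`. -/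
def θhat (b : Fin 2 → Fin M.p → M.Ω → Fin M.p → ℝ) (t : Fin 2) (i j : Fin M.p) (ω : M.Ω) : ℝ :=
  (1 / (M.n * M.q : ℝ)) * (1 + (b t i ω j) ^ 2 * M.rhat b t i i ω / M.rhat b t j j ω)

/-- `ϱ̂^{(1,2)}_{i,j}`. -/
def ϱhat (b : Fin 2 → Fin M.p → M.Ω → Fin M.p → ℝ) (i j : Fin M.p) (ω : M.Ω) : ℝ :=
  ((1 / (M.n * M.q : ℝ)) * ∑ k, ∑ l, M.εhat b k 0 i l ω * M.εhat b k 1 j l ω)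
    / Real.sqrt (M.rhat b 0 i i ω * M.rhat b 1 j j ω)

/-- The variance-corrected estimator `Θ̂_{i,j}` (temporal covariances known). -/
def Θhat (b : Fin 2 → Fin M.p → M.Ω → Fin M.p → ℝ) (i j : Fin M.p) (ω : M.Ω) : ℝ :=
  M.θhat b 0 i j ω + M.θhat b 1 i j ω
    - (2 / (M.n * M.q : ℝ))
      * (M.ϱhat b i i ω * M.ϱhat b j j ω + M.ϱhat b i j ω * M.ϱhat b j i ω)
      * ((M.q : ℝ) * frobSq M.PT12 / (Matrix.trace M.PT12) ^ 2)

/-- `ρ̂_{S_t,i,j}`. -/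
def ρShat (b : Fin 2 → Fin M.p → M.Ω → Fin M.p → ℝ) (t : Fin 2) (i j : Fin M.p) (ω : M.Ω) : ℝ :=
  M.rhat b t i j ω / Real.sqrt (M.rhat b t i i ω * M.rhat b t j j ω)

/-- The paired-test statistic `W_{i,j}` (temporal covariances known). -/
def W (b : Fin 2 → Fin M.p → M.Ω → Fin M.p → ℝ) (i j : Fin M.p) (ω : M.Ω) : ℝ :=
  (M.ρShat b 0 i j ω - M.ρShat b 1 i j ω) / Real.sqrt (M.Θhat b i j ω)

section DataDriven

variable (R : Fin 2 → M.Ω → Matrix (Fin M.q) (Fin M.q) ℝ)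
variable (b : Fin 2 → Fin M.p → M.Ω → Fin M.p → ℝ)

/-- Data-driven whitened observations `Y_k^{(t,d)} = X_k^{(t)} Σ̂_{T_t}^{-1/2}`, where
`R t ω` is the (random) estimator `Σ̂_{T_t}^{-1/2}`. -/
def Yd (k : Fin M.n) (t : Fin 2) (ω : M.Ω) : Matrix (Fin M.p) (Fin M.q) ℝ :=
  M.X k t ω * R t ω

/-- Sample means of the data-driven whitened data. -/
def Ybard (t : Fin 2) (i : Fin M.p) (ω : M.Ω) : ℝ :=
  (1 / (M.n * M.q : ℝ)) * ∑ k, ∑ l, M.Yd R k t ω i l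

/-- Data-driven residuals `ε̂^{(t,d)}_{k,i,l}`. -/
def εhatd (k : Fin M.n) (t : Fin 2) (i : Fin M.p) (l : Fin M.q) (ω : M.Ω) : ℝ :=
  M.Yd R k t ω i l - M.Ybard R t i ω
    - ∑ j ∈ Finset.univ.erase i, b t i ω j * (M.Yd R k t ω j l - M.Ybard R t j ω)

/-- `r̃^{(t,d)}_{i,j}`. -/
def rtild (t : Fin 2) (i j : Fin M.p) (ω : M.Ω) : ℝ :=
  (1 / (M.n * M.q : ℝ)) * ∑ k, ∑ l, M.εhatd R b k t i l ω * M.εhatd R b k t j l ω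

/-- `r̂^{(t,d)}_{i,j}`. -/
def rhatd (t : Fin 2) (i j : Fin M.p) (ω : M.Ω) : ℝ :=
  if i = j then M.rtild R b t i i ω
  else -(M.rtild R b t i j ω + M.rtild R b t i i ω * b t i ω j
          + M.rtild R b t j j ω * b t j ω i)

/-- `θ̂^{(t,d)}_{i,j}`. -/
def θhatd (t : Fin 2) (i j : Fin M.p) (ω : M.Ω) : ℝ :=
  (1 / (M.n * M.q : ℝ)) * (1 + (b t i ω j) ^ 2 * M.rhatd R b t i i ω / M.rhatd R b t j j ω)

/-- `ϱ̂^{(1,2,d)}_{i,j}`. -/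
def ϱhatd (i j : Fin M.p) (ω : M.Ω) : ℝ :=
  ((1 / (M.n * M.q : ℝ)) * ∑ k, ∑ l, M.εhatd R b k 0 i l ω * M.εhatd R b k 1 j l ω)
    / Real.sqrt (M.rhatd R b 0 i i ω * M.rhatd R b 1 j j ω)

/-- Row-pooled means of the data-driven whitened data. -/
def YbarRowd (t : Fin 2) (l : Fin M.q) (ω : M.Ω) : ℝ :=
  (1 / (M.n * M.p : ℝ)) * ∑ k, ∑ i, M.Yd R k t ω i l

/-- The pooled estimator `P̂^{(d)}_{T_{1,2}}`. -/
def Phatd (ω : M.Ω) : Matrix (Fin M.q) (Fin M.q) ℝ :=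
  Matrix.of fun l1 l2 =>
    (1 / (M.n * M.p : ℝ)) * ∑ k, ∑ i,
      (M.Yd R k 0 ω i l1 - M.YbarRowd R 0 l1 ω) * (M.Yd R k 1 ω i l2 - M.YbarRowd R 1 l2 ω)

/-- The variance-corrected estimator `Θ̂^{(d)}_{i,j}` (temporal covariances unknown). -/
def Θhatd (i j : Fin M.p) (ω : M.Ω) : ℝ :=
  M.θhatd R b 0 i j ω + M.θhatd R b 1 i j ω
    - (2 / (M.n * M.q : ℝ))
      * (M.ϱhatd R b i i ω * M.ϱhatd R b j j ω + M.ϱhatd R b i j ω * M.ϱhatd R b j i ω)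
      * ((M.q : ℝ) * frobSq (M.Phatd R ω) / (Matrix.trace (M.Phatd R ω)) ^ 2)

/-- `ρ̂_{S_t,i,j}` in the data-driven case. -/
def ρShatd (t : Fin 2) (i j : Fin M.p) (ω : M.Ω) : ℝ :=
  M.rhatd R b t i j ω / Real.sqrt (M.rhatd R b t i i ω * M.rhatd R b t j j ω)

/-- The paired-test statistic `W_{i,j}` in the data-driven case. -/
def Wd (i j : Fin M.p) (ω : M.Ω) : ℝ :=
  (M.ρShatd R b 0 i j ω - M.ρShatd R b 1 i j ω) / Real.sqrt (M.Θhatd R b i j ω)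

/-- The column-precision matrices `(ω̂^{(t,d)}_{l,i,j}) = [Cov(X^{(t)} Σ̂_{T_t}^{-1/2})]⁻¹`. -/
def Ωhatd (t : Fin 2) (l : Fin M.q) : Matrix (Fin M.p) (Fin M.p) ℝ :=
  (Matrix.of fun i j =>
    cov M.μ (fun ω => M.Yd R ⟨0, M.npos⟩ t ω i l) (fun ω => M.Yd R ⟨0, M.npos⟩ t ω j l))⁻¹

/-- The sparsity level `s_{p,q}`. -/
def sPQ : ℕ :=
  ⨆ t : Fin 2, ⨆ l : Fin M.q, ⨆ i : Fin M.p,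
    ∑ j, max (if M.ΩS t i j ≠ 0 then 1 else 0) (if M.Ωhatd R t l i j ≠ 0 then 1 else 0)

/-- `log max(p, q, n)`. -/
def logMaxPQN : ℝ := Real.log (max (max M.p M.q) M.n)

/-- The rate `r^{(1)}_{n,p,q,t}` of assumption (A7). -/
def rate1 (t : Fin 2) : ℝ :=
  ((M.sPQ R : ℝ) * M.q * (M.logMaxPQN) ^ ((3 : ℝ) / 2) * (L1norm (M.ΩS t)) ^ 2)⁻¹

/-- The rate `r^{(2)}_{n,p,q,t}` of assumption (A7). -/
def rate2 (t : Fin 2) : ℝ :=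
  ((M.n * M.q : ℝ) * (M.sPQ R : ℝ) ^ 2 * Real.log M.p * (M.logMaxPQN) ^ 2) ^ (-(1 : ℝ) / 4)
    * ((M.q : ℝ) * (L1norm (M.ΩS t)) ^ 2)⁻¹

/-- `min_t min(r^{(1)}_{n,p,q,t}, r^{(2)}_{n,p,q,t})`. -/
def rateMin : ℝ :=
  min (min (M.rate1 R 0) (M.rate2 R 0)) (min (M.rate1 R 1) (M.rate2 R 1))

end DataDriven

/-- Mean of the true errors. -/
def εbar (t : Fin 2) (i : Fin M.p) (ω : M.Ω) : ℝ :=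
  (1 / (M.n * M.q : ℝ)) * ∑ k, ∑ l, M.ε k t i l ω

/-- `σ̂^{(t)}_{i,i,ε}`, the empirical variance of the true errors. -/
def σhatε (t : Fin 2) (i : Fin M.p) (ω : M.Ω) : ℝ :=
  (1 / (M.n * M.q : ℝ)) * ∑ k, ∑ l, (M.ε k t i l ω - M.εbar t i ω) ^ 2

/-- `R̃^{(t)}_{i,j}`, the empirical covariance of the true errors. -/
def Rtil (t : Fin 2) (i j : Fin M.p) (ω : M.Ω) : ℝ :=
  (1 / (M.n * M.q : ℝ)) * ∑ k, ∑ l,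
    (M.ε k t i l ω - M.εbar t i ω) * (M.ε k t j l ω - M.εbar t j ω)

/-- The set of true nulls `H₀`. -/
def H0fin : Finset (Fin M.p × Fin M.p) :=
  Finset.univ.filter fun pr => pr.1 < pr.2 ∧ M.ρS 0 pr.1 pr.2 = M.ρS 1 pr.1 pr.2

/-- `ℓ₀ = |H₀|`. -/
def ell0 : ℕ := M.H0fin.card

/-- All pairs `(i, j)` with `i < j`. -/
def allPairs : Finset (Fin M.p × Fin M.p) :=
  Finset.univ.filter fun pr => pr.1 < pr.2

/-- `ℓ = (p² − p)/2` as a real number. -/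
def ellR : ℝ := ((M.p : ℝ) ^ 2 - M.p) / 2

/-- The set `A_τ` of pairs with non-negligible precision entries. -/
def Atau (τ : ℝ) : Finset (Fin M.p × Fin M.p) :=
  Finset.univ.filter fun pr => pr.1 < pr.2 ∧
    ((Real.log M.p) ^ (-(2 : ℝ) - τ) ≤ |M.ΩS 0 pr.1 pr.2| ∨
      (Real.log M.p) ^ (-(2 : ℝ) - τ) ≤ |M.ΩS 1 pr.1 pr.2|)

/-- Cardinality of the signal set `S(η)` of assumption (A4). -/
def Scard (η : ℝ) : ℕ :=
  (Finset.univ.filter fun pr : Fin M.p × Fin M.p => pr.1 < pr.2 ∧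
    (Real.log M.p) ^ ((1 : ℝ) / 2 + η)
      ≤ |M.ρS 0 pr.1 pr.2 - M.ρS 1 pr.1 pr.2| / Real.sqrt (M.Θ pr.1 pr.2)).card

/-- Number of rejections at threshold `h` for a generic statistic `Wf`. -/
def rejections (Wf : Fin M.p → Fin M.p → M.Ω → ℝ) (h : ℝ) (ω : M.Ω) : ℕ :=
  (M.allPairs.filter fun pr => h ≤ |Wf pr.1 pr.2 ω|).card

/-- False discovery proportion at threshold `h`. -/
def FDP (Wf : Fin M.p → Fin M.p → M.Ω → ℝ) (h : ℝ) (ω : M.Ω) : ℝ :=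
  ((M.H0fin.filter fun pr => h ≤ |Wf pr.1 pr.2 ω|).card : ℝ)
    / max (M.rejections Wf h ω : ℝ) 1

/-- Estimated false discovery proportion `F̂DP(h)`. -/
def FDPhat (Wf : Fin M.p → Fin M.p → M.Ω → ℝ) (h : ℝ) (ω : M.Ω) : ℝ :=
  2 * (1 - Phi h) * (((M.p : ℝ) ^ 2 - M.p) / 2) / max (M.rejections Wf h ω : ℝ) 1

open Classical in
/-- The data-driven threshold `ĥ_α`. -/
def hhat (Wf : Fin M.p → Fin M.p → M.Ω → ℝ) (α : ℝ) (ω : M.Ω) : ℝ :=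
  if h : {h : ℝ | 0 ≤ h ∧ h ≤ 2 * Real.sqrt (Real.log M.p) ∧ M.FDPhat Wf h ω ≤ α}.Nonempty
  then sInf {h : ℝ | 0 ≤ h ∧ h ≤ 2 * Real.sqrt (Real.log M.p) ∧ M.FDPhat Wf h ω ≤ α}
  else 2 * Real.sqrt (Real.log M.p)

/-- `FDP(ĥ_α)`. -/
def FDPsel (Wf : Fin M.p → Fin M.p → M.Ω → ℝ) (α : ℝ) (ω : M.Ω) : ℝ :=
  M.FDP Wf (M.hhat Wf α ω) ω

/-- `FDR(ĥ_α) = E[FDP(ĥ_α)]`. -/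
def FDRsel (Wf : Fin M.p → Fin M.p → M.Ω → ℝ) (α : ℝ) : ℝ :=
  ∫ ω, M.FDPsel Wf α ω ∂M.μ

/-- `Z_{k,m,l}` for the pair `pr = (i_m, j_m)`. -/
def Zr (k : Fin M.n) (pr : Fin M.p × Fin M.p) (l : Fin M.q) (ω : M.Ω) : ℝ :=
  (M.ε k 1 pr.1 l ω * M.ε k 1 pr.2 l ω - M.ε k 0 pr.1 l ω * M.ε k 0 pr.2 l ω)
    - ∫ ω', (M.ε k 1 pr.1 l ω' * M.ε k 1 pr.2 l ω'
        - M.ε k 0 pr.1 l ω' * M.ε k 0 pr.2 l ω') ∂M.μ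

/-- The truncation level `τ_n = 32 log(p + nq)`. -/
def τn : ℝ := 32 * Real.log ((M.p : ℝ) + M.n * M.q)

/-- `Θ_m = Var(ε^{(1)}_{k,i_m,l} ε^{(1)}_{k,j_m,l} − ε^{(2)}_{k,i_m,l} ε^{(2)}_{k,j_m,l})`. -/
def Θm (pr : Fin M.p × Fin M.p) : ℝ :=
  ProbabilityTheory.variance (fun ω =>
    M.ε ⟨0, M.npos⟩ 0 pr.1 ⟨0, M.qpos⟩ ω * M.ε ⟨0, M.npos⟩ 0 pr.2 ⟨0, M.qpos⟩ ω
      - M.ε ⟨0, M.npos⟩ 1 pr.1 ⟨0, M.qpos⟩ ω * M.ε ⟨0, M.npos⟩ 1 pr.2 ⟨0, M.qpos⟩ ω) M.μ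

/-- Truncated `Z`. -/
def Ztrunc (k : Fin M.n) (pr : Fin M.p × Fin M.p) (l : Fin M.q) (ω : M.Ω) : ℝ :=
  if |M.Zr k pr l ω| ≤ M.τn then M.Zr k pr l ω else 0

/-- `Ẑ_{k,m,l}`, the centered truncation of `Z_{k,m,l}`. -/
def Zhat (k : Fin M.n) (pr : Fin M.p × Fin M.p) (l : Fin M.q) (ω : M.Ω) : ℝ :=
  M.Ztrunc k pr l ω - ∫ ω', M.Ztrunc k pr l ω' ∂M.μ

/-- `V_m`. -/
def Vm (pr : Fin M.p × Fin M.p) (ω : M.Ω) : ℝ :=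
  (Real.sqrt ((M.n * M.q : ℝ) * M.Θm pr))⁻¹ * ∑ k, ∑ l, M.Zr k pr l ω

/-- `V̂_m`. -/
def Vhatm (pr : Fin M.p × Fin M.p) (ω : M.Ω) : ℝ :=
  (Real.sqrt ((M.n * M.q : ℝ) * M.Θm pr))⁻¹ * ∑ k, ∑ l, M.Zhat k pr l ω

/-- Row-pooled means of the raw data. -/
def XbarRow (t : Fin 2) (l : Fin M.q) (ω : M.Ω) : ℝ :=
  (1 / (M.n * M.p : ℝ)) * ∑ k, ∑ i, M.X k t ω i l

/-- The pooled sample cross-temporal covariance `Σ̂_{T_{1,2}}`. -/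
def ShatT12 (ω : M.Ω) : Matrix (Fin M.q) (Fin M.q) ℝ :=
  Matrix.of fun l1 l2 =>
    (1 / (M.n * M.p : ℝ)) * ∑ k, ∑ i,
      (M.X k 0 ω i l1 - M.XbarRow 0 l1 ω) * (M.X k 1 ω i l2 - M.XbarRow 1 l2 ω)

end PairedModel

/-- `F ν = o_p(a ν)` along a sequence of models. -/
def SeqLittleOP (M : ℕ → PairedModel) (F : ∀ ν, (M ν).Ω → ℝ) (a : ℕ → ℝ) : Prop :=
  ∀ ε : ℝ, 0 < ε →
    Tendsto (fun ν => (M ν).μ {ω | ε * |a ν| < |F ν ω|}) atTop (nhds 0)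

/-- `F ν = O_p(a ν)` along a sequence of models. -/
def SeqBigOP (M : ℕ → PairedModel) (F : ∀ ν, (M ν).Ω → ℝ) (a : ℕ → ℝ) : Prop :=
  ∀ ε : ℝ, 0 < ε → ∃ C : ℝ, 0 < C ∧
    ∀ᶠ ν in atTop, (M ν).μ {ω | C * |a ν| < |F ν ω|} ≤ ENNReal.ofReal ε

/-- The dimensions diverge along the sequence of models. -/
def DimsTendsto (M : ℕ → PairedModel) : Prop :=
  Tendsto (fun ν => (M ν).n) atTop atTop ∧ Tendsto (fun ν => (M ν).p) atTop atTop ∧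
    Tendsto (fun ν => (M ν).q) atTop atTop

/-- Assumption (A2): `|A_τ ∩ H₀| = o(p^ν)` for every `ν > 0`. -/
def A2seq (M : ℕ → PairedModel) (τ : ℝ) : Prop :=
  ∀ e : ℝ, 0 < e →
    Tendsto (fun k => ((((M k).Atau τ) ∩ (M k).H0fin).card : ℝ) / ((M k).p : ℝ) ^ e)
      atTop (nhds 0)

/-- Assumption (A3): `log p = o((nq)^{1/5})` and `q = o(np/(log p)²)`. -/
def A3seq (M : ℕ → PairedModel) : Prop :=
  Tendsto (fun ν => Real.log ((M ν).p) / (((M ν).n * (M ν).q : ℝ)) ^ ((1 : ℝ) / 5))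
      atTop (nhds 0) ∧
  Tendsto (fun ν => ((M ν).q : ℝ) * (Real.log ((M ν).p)) ^ 2 / (((M ν).n : ℝ) * (M ν).p))
      atTop (nhds 0)

/-- Assumption (A4): the number of strong signals is at least
`[((8π)^{1/2} α)⁻¹ + δ](log log p)^{1/2}`. -/
def A4seq (M : ℕ → PairedModel) (α : ℝ) : Prop :=
  ∃ η δ : ℝ, 0 < η ∧ 0 < δ ∧ ∀ ν,
    (1 / (Real.sqrt (8 * Real.pi) * α) + δ) * Real.sqrt (Real.log (Real.log ((M ν).p)))
      ≤ ((M ν).Scard η : ℝ)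

/-- Assumption (A5)/(A6): rates of the regression coefficient estimators. -/
def A5seq (M : ℕ → PairedModel)
    (b : ∀ ν, Fin 2 → Fin (M ν).p → (M ν).Ω → Fin (M ν).p → ℝ) : Prop :=
  ∀ t : Fin 2,
    SeqLittleOP M
      (fun ν ω => ⨆ i, ∑ j ∈ Finset.univ.erase i, |b ν t i ω j - (M ν).β t i j|)
      (fun ν => ((M ν).logMaxPQN)⁻¹) ∧
    SeqLittleOP M
      (fun ν ω => ⨆ i, Real.sqrt (∑ j ∈ Finset.univ.erase i, (b ν t i ω j - (M ν).β t i j) ^ 2))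
      (fun ν => (((M ν).n * (M ν).q : ℝ) * Real.log ((M ν).p)) ^ (-(1 : ℝ) / 4))

/-- Assumption (A7): rate of the estimator of `Σ_{T_t}^{-1/2}`. -/
def A7seq (M : ℕ → PairedModel)
    (R : ∀ ν, Fin 2 → (M ν).Ω → Matrix (Fin (M ν).q) (Fin (M ν).q) ℝ) : Prop :=
  ∃ c : ℝ, 0 < c ∧ ∃ rr : ℕ → ℝ,
    (∀ t : Fin 2, SeqLittleOP M
        (fun ν ω => ⨆ l1, ⨆ l2, |R ν t ω l1 l2 - c * (M ν).invSqrtT t l1 l2|) rr) ∧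
    Tendsto (fun ν => rr ν / (M ν).rateMin (R ν)) atTop (nhds 0)


section Helpers

open MeasureTheory ProbabilityTheory Real Set
open scoped NNReal

private lemma integrable_sq_mul_exp_neg_mul_sq' {b : ℝ} (hb : 0 < b) :
    Integrable (fun x : ℝ => x ^ 2 * Real.exp (-b * x ^ 2)) := by
  have h := integrable_rpow_mul_exp_neg_mul_sq hb (s := 2) (by norm_num)
  refine h.congr (Filter.Eventually.of_forall fun x => ?_)
  norm_num [show (2 : ℝ) = ((2 : ℕ) : ℝ) by norm_num, Real.rpow_natCast]

private lemma integral_sq_mul_exp_neg_mul_sq' {b : ℝ} (hb : 0 < b) :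
    ∫ x : ℝ, x ^ 2 * Real.exp (-b * x ^ 2) = b ^ (-(3 : ℝ)/2) * Real.sqrt π / 2 := by
  have heven : ∀ x : ℝ, (fun y : ℝ => y ^ 2 * Real.exp (-b * y ^ 2)) |x|
      = x ^ 2 * Real.exp (-b * x ^ 2) := by
    intro x; simp [sq_abs]
  calc ∫ x : ℝ, x ^ 2 * Real.exp (-b * x ^ 2)
      = ∫ x : ℝ, (fun y : ℝ => y ^ 2 * Real.exp (-b * y ^ 2)) |x| := by
        refine integral_congr_ae (Filter.Eventually.of_forall fun x => (heven x).symm)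
    _ = 2 * ∫ x in Ioi (0:ℝ), x ^ 2 * Real.exp (-b * x ^ 2) :=
        integral_comp_abs (f := fun y : ℝ => y ^ 2 * Real.exp (-b * y ^ 2))
    _ = 2 * ∫ x in Ioi (0:ℝ), x ^ (2:ℝ) * Real.exp (-b * x ^ (2:ℝ)) := by
        congr 1
        refine setIntegral_congr_fun measurableSet_Ioi (fun x hx => ?_)
        rw [show (2 : ℝ) = ((2 : ℕ) : ℝ) by norm_num, Real.rpow_natCast]
    _ = 2 * (b ^ (-((2:ℝ) + 1) / 2) * (1 / 2) * Real.Gamma (((2:ℝ) + 1) / 2)) := by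
        rw [integral_rpow_mul_exp_neg_mul_rpow (by norm_num) (by norm_num) hb]
    _ = b ^ (-(3 : ℝ)/2) * Real.sqrt π / 2 := by
        have h32 : ((2:ℝ) + 1) / 2 = 1/2 + 1 := by norm_num
        rw [h32, Real.Gamma_add_one (by norm_num), Real.Gamma_one_half_eq]
        norm_num
        ring

private lemma gaussianPDFReal_pt (v : ℝ≥0) (x : ℝ) :
    gaussianPDFReal 0 v x = (Real.sqrt (2 * π * v))⁻¹ * Real.exp (-(2 * (v:ℝ))⁻¹ * x ^ 2) := by
  rw [gaussianPDFReal]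
  congr 1
  rw [sub_zero]
  congr 1
  ring

private lemma integrable_sq_gaussianReal (v : ℝ≥0) :
    Integrable (fun x : ℝ => x ^ 2) (gaussianReal 0 v) := by
  rcases eq_or_ne v 0 with hv | hv
  · rw [hv, gaussianReal_zero_var]
    exact (integrable_const ((0:ℝ) ^ 2)).congr (ae_eq_dirac (fun x : ℝ => x ^ 2)).symm
  · have hvpos : (0:ℝ) < v := lt_of_le_of_ne v.coe_nonneg (by exact_mod_cast (Ne.symm hv))
    have hb : (0:ℝ) < (2 * (v:ℝ))⁻¹ := by positivity
    rw [gaussianReal_of_var_ne_zero _ hv, gaussianPDF_def]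
    rw [show (fun x => ENNReal.ofReal (gaussianPDFReal 0 v x))
        = fun x => ((gaussianPDFReal 0 v x).toNNReal : ℝ≥0∞) from rfl]
    rw [integrable_withDensity_iff_integrable_coe_smul
      ((measurable_gaussianPDFReal 0 v).real_toNNReal)]
    refine (((integrable_sq_mul_exp_neg_mul_sq' hb).const_mul
      ((Real.sqrt (2 * π * v))⁻¹)).congr (Filter.Eventually.of_forall fun x => ?_))
    simp only [NNReal.smul_def, smul_eq_mul]
    rw [Real.coe_toNNReal _ (gaussianPDFReal_nonneg 0 v x), gaussianPDFReal_pt]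
    ring

private lemma integral_sq_gaussianReal (v : ℝ≥0) :
    ∫ x, x ^ 2 ∂(gaussianReal 0 v) = v := by
  rcases eq_or_ne v 0 with hv | hv
  · simp [hv]
  · have hvpos : (0:ℝ) < v := lt_of_le_of_ne v.coe_nonneg (by exact_mod_cast (Ne.symm hv))
    have hb : (0:ℝ) < (2 * (v:ℝ))⁻¹ := by positivity
    rw [gaussianReal_of_var_ne_zero _ hv, gaussianPDF_def]
    rw [show (fun x => ENNReal.ofReal (gaussianPDFReal 0 v x))
        = fun x => ((gaussianPDFReal 0 v x).toNNReal : ℝ≥0∞) from rfl]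
    rw [integral_withDensity_eq_integral_smul ((measurable_gaussianPDFReal 0 v).real_toNNReal)]
    have : ∀ x : ℝ, (gaussianPDFReal 0 v x).toNNReal • x ^ 2
        = (Real.sqrt (2 * π * v))⁻¹ * (x ^ 2 * Real.exp (-(2 * (v:ℝ))⁻¹ * x ^ 2)) := by
      intro x
      rw [NNReal.smul_def, smul_eq_mul, Real.coe_toNNReal _ (gaussianPDFReal_nonneg 0 v x),
        gaussianPDFReal_pt]
      ring
    rw [integral_congr_ae (Filter.Eventually.of_forall this), integral_const_mul,
      integral_sq_mul_exp_neg_mul_sq' hb]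
    have h1 : ((2 * (v:ℝ))⁻¹) ^ (-(3:ℝ)/2) = (2 * (v:ℝ)) ^ ((3:ℝ)/2) := by
      rw [← Real.rpow_neg_one, ← Real.rpow_mul (by positivity)]
      norm_num
    set s := Real.sqrt (2 * (v:ℝ)) with hs
    have hs2 : s ^ 2 = 2 * (v:ℝ) := Real.sq_sqrt (by positivity)
    have hspos : 0 < s := Real.sqrt_pos.mpr (by positivity)
    have h2 : (2 * (v:ℝ)) ^ ((3:ℝ)/2) = s ^ 3 := by
      rw [← hs2, ← Real.rpow_natCast s 2, ← Real.rpow_mul hspos.le, ← Real.rpow_natCast s 3]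
      norm_num
    have h3 : Real.sqrt (2 * π * v) = s * Real.sqrt π := by
      rw [hs, ← Real.sqrt_mul (by positivity)]
      congr 1
      ring
    rw [h1, h2, h3]
    have hπ : 0 < Real.sqrt π := Real.sqrt_pos.mpr Real.pi_pos
    have hcube : s ^ 3 = 2 * (v:ℝ) * s := by nlinarith [hs2]
    field_simp
    exact hs2

private lemma gaussian_family_integral_mul {Ω : Type*} [MeasurableSpace Ω] {μ : Measure Ω}
    [IsProbabilityMeasure μ] {ι : Type*} [Fintype ι] [DecidableEq ι] {Z : ι → Ω → ℝ}
    {C : Matrix ι ι ℝ} (hZ : ∀ i, Measurable (Z i))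
    (hG : IsCenteredGaussianFamily μ Z C) (hC : C.PosSemidef) (a b : ι) :
    Integrable (fun ω => Z a ω * Z b ω) μ ∧ ∫ ω, Z a ω * Z b ω ∂μ = C a b := by
  have hQ : ∀ c : ι → ℝ, 0 ≤ ∑ i, ∑ j, c i * C i j * c j := by
    intro c
    have h := hC.dotProduct_mulVec_nonneg c
    simp only [star_trivial] at h
    refine le_of_le_of_eq h ?_
    simp [dotProduct, Matrix.mulVec, Finset.mul_sum, mul_assoc]
  have hL : ∀ c : ι → ℝ, Measurable (fun ω => ∑ i, c i * Z i ω) := by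
    intro c
    exact Finset.measurable_sum _ fun i _ => (hZ i).const_mul _
  have hm : Measurable fun x : ℝ => x ^ 2 := by fun_prop
  have hmain : ∀ c : ι → ℝ, Integrable (fun ω => (∑ i, c i * Z i ω) ^ 2) μ ∧
      ∫ ω, (∑ i, c i * Z i ω) ^ 2 ∂μ = ∑ i, ∑ j, c i * C i j * c j := by
    intro c
    have hmap := hG c
    have hint : Integrable (fun x : ℝ => x ^ 2) (μ.map (fun ω => ∑ i, c i * Z i ω)) := by
      rw [hmap]; exact integrable_sq_gaussianReal _
    rw [integrable_map_measure hm.aestronglyMeasurable (hL c).aemeasurable] at hint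
    refine ⟨hint, ?_⟩
    calc ∫ ω, (∑ i, c i * Z i ω) ^ 2 ∂μ
        = ∫ x, x ^ 2 ∂(μ.map (fun ω => ∑ i, c i * Z i ω)) :=
          (integral_map (hL c).aemeasurable hm.aestronglyMeasurable).symm
      _ = ((∑ i, ∑ j, c i * C i j * c j).toNNReal : ℝ) := by
          rw [hmap, integral_sq_gaussianReal]
      _ = ∑ i, ∑ j, c i * C i j * c j := Real.coe_toNNReal _ (hQ c)
  have hsum : ∀ (x : ι) (g : ι → ℝ),
      ∑ i, (if i = x then (1:ℝ) else 0) * g i = g x := by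
    intro x g
    simp [ite_mul]
  have hQone : ∀ x y : ι,
      (∑ i, ∑ j, (if i = x then (1:ℝ) else 0) * C i j * (if j = y then (1:ℝ) else 0))
        = C x y := by
    intro x y
    simp [ite_mul, mul_ite]
  have single : ∀ x : ι, Integrable (fun ω => Z x ω ^ 2) μ ∧ ∫ ω, Z x ω ^ 2 ∂μ = C x x := by
    intro x
    have e : (fun ω => (∑ i, (if i = x then (1:ℝ) else 0) * Z i ω) ^ 2)
        = fun ω => Z x ω ^ 2 := by
      funext ω
      rw [hsum x]
    have h := hmain (fun i => if i = x then (1:ℝ) else 0)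
    rw [e, hQone x x] at h
    exact h
  have pair : ∀ x y : ι, Integrable (fun ω => (Z x ω + Z y ω) ^ 2) μ ∧
      ∫ ω, (Z x ω + Z y ω) ^ 2 ∂μ = C x x + C x y + (C y x + C y y) := by
    intro x y
    have e : (fun ω => (∑ i, ((if i = x then (1:ℝ) else 0) + (if i = y then (1:ℝ) else 0)) * Z i ω) ^ 2)
        = fun ω => (Z x ω + Z y ω) ^ 2 := by
      funext ω
      simp only [add_mul, Finset.sum_add_distrib, hsum]
    have hexp : ∀ i j, ((if i = x then (1:ℝ) else 0) + (if i = y then (1:ℝ) else 0)) * C i j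
          * ((if j = x then (1:ℝ) else 0) + (if j = y then (1:ℝ) else 0))
        = (if i = x then (1:ℝ) else 0) * C i j * (if j = x then (1:ℝ) else 0)
          + (if i = x then (1:ℝ) else 0) * C i j * (if j = y then (1:ℝ) else 0)
          + ((if i = y then (1:ℝ) else 0) * C i j * (if j = x then (1:ℝ) else 0)
          + (if i = y then (1:ℝ) else 0) * C i j * (if j = y then (1:ℝ) else 0)) := by
      intro i j
      ring
    have h := hmain (fun i => (if i = x then (1:ℝ) else 0) + (if i = y then (1:ℝ) else 0))
    rw [e] at h
    refine ⟨h.1, ?_⟩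
    rw [h.2]
    simp only [hexp, Finset.sum_add_distrib, hQone]
  have h1 := (pair a b).1
  have h2 := (single a).1
  have h3 := (single b).1
  have hpt : ∀ ω, Z a ω * Z b ω = ((Z a ω + Z b ω) ^ 2 - (Z a ω) ^ 2 - (Z b ω) ^ 2) / 2 := by
    intro ω
    ring
  have hba : C b a = C a b := by
    have := hC.1.apply a b
    simpa using this
  have h12 : Integrable (fun ω => (Z a ω + Z b ω) ^ 2 - Z a ω ^ 2) μ := h1.sub h2
  have h123 : Integrable (fun ω => ((Z a ω + Z b ω) ^ 2 - Z a ω ^ 2 - Z b ω ^ 2) / 2) μ :=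
    (h12.sub h3).div_const 2
  have hint : Integrable (fun ω => Z a ω * Z b ω) μ :=
    h123.congr (Filter.Eventually.of_forall fun ω => (hpt ω).symm)
  refine ⟨hint, ?_⟩
  calc ∫ ω, Z a ω * Z b ω ∂μ
      = ∫ ω, ((Z a ω + Z b ω) ^ 2 - (Z a ω) ^ 2 - (Z b ω) ^ 2) / 2 ∂μ :=
        integral_congr_ae (Filter.Eventually.of_forall fun ω => hpt ω)
    _ = ((∫ ω, (Z a ω + Z b ω) ^ 2 ∂μ) - (∫ ω, (Z a ω) ^ 2 ∂μ) - ∫ ω, (Z b ω) ^ 2 ∂μ) / 2 := by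
        rw [integral_div, integral_sub h12 h3, integral_sub h1 h2]
    _ = C a b := by
        rw [(pair a b).2, (single a).2, (single b).2, hba]
        ring

end Helpers

/-- The expectation of the pooled cross products of the errors. -/
theorem statement_4 (M : PairedModel) (i j : Fin M.p) :
    (∫ ω, (1 / (M.n * M.q : ℝ)) * ∑ k, ∑ l, M.ε k 0 i l ω * M.ε k 1 j l ω ∂M.μ)
      = Real.sqrt (M.r 0 i i * M.r 1 j j) * M.ρS12 i j * Matrix.trace M.PT12 / M.q := by
  classical
  have hdiag : ∀ t : Fin 2, ∀ x : Fin M.p, 0 < M.ΩS t x x := by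
    intro t x
    have hne : (Pi.single x (1:ℝ) : Fin M.p → ℝ) ≠ 0 := by
      intro h
      have := congrFun h x
      simp at this
    have h := ((M.hSigS t).inv).dotProduct_mulVec_pos hne
    simpa [dotProduct, Matrix.mulVec, Pi.single_apply, ite_mul, mul_ite,
      PairedModel.ΩS] using h
  have hΩ1sym : ∀ a b : Fin M.p, M.ΩS 1 a b = M.ΩS 1 b a := by
    intro a b
    have h : (M.ΩS 1).IsHermitian := ((M.hSigS 1).inv).1
    have := h.apply b a
    simpa using this
  have hA0sym : ∀ s l : Fin M.q, M.invSqrtT 0 s l = M.invSqrtT 0 l s := by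
    intro s l
    have h : (M.invSqrtT 0).IsHermitian :=
      (Matrix.isHermitian_mul_mul_conjTranspose _ (Matrix.isHermitian_diagonal _)).inv
    have := h.apply l s
    simpa using this
  -- ε as a full sum
  have hε : ∀ (t : Fin 2) (a : Fin M.p) (k : Fin M.n) (l : Fin M.q) (ω : M.Ω),
      M.ε k t a l ω = ∑ m, (M.ΩS t a m / M.ΩS t a a) * M.Y k t ω m l := by
    intro t a k l ω
    rw [PairedModel.ε]
    have h1 : ∑ m ∈ Finset.univ.erase a, M.β t a m * M.Y k t ω m l
        = -∑ m ∈ Finset.univ.erase a, (M.ΩS t a m / M.ΩS t a a) * M.Y k t ω m l := by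
      rw [← Finset.sum_neg_distrib]
      refine Finset.sum_congr rfl fun m _ => ?_
      rw [PairedModel.β, neg_div]
      ring
    rw [h1, sub_neg_eq_add,
      ← Finset.add_sum_erase _ (fun m => (M.ΩS t a m / M.ΩS t a a) * M.Y k t ω m l)
        (Finset.mem_univ a)]
    rw [div_self (hdiag t a).ne', one_mul]
  -- covariances of the raw entries
  have hZmeas : ∀ (k : Fin M.n) (tl : Fin 2 × Fin M.p × Fin M.q),
      Measurable fun ω => M.X k tl.1 ω tl.2.1 tl.2.2 := fun k tl => M.measX k tl.1 tl.2.1 tl.2.2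
  have hkey : ∀ (k : Fin M.n) (m m' : Fin M.p) (s s' : Fin M.q),
      MeasureTheory.Integrable (fun ω => M.X k 0 ω m s * M.X k 1 ω m' s') M.μ ∧
      ∫ ω, M.X k 0 ω m s * M.X k 1 ω m' s' ∂M.μ = M.SigS12 m m' * M.SigT12 s s' := by
    intro k m m' s s'
    have h := gaussian_family_integral_mul (hZmeas k) (M.gaussX k) M.hSig
      (0, m, s) (1, m', s')
    simpa [pairCov, show (1 : Fin 2) ≠ 0 by decide] using h
  -- expand the product of errors
  have hprod : ∀ (k : Fin M.n) (l : Fin M.q) (ω : M.Ω),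
      M.ε k 0 i l ω * M.ε k 1 j l ω
        = ∑ m, ∑ m', ∑ s, ∑ s',
            ((M.ΩS 0 i m / M.ΩS 0 i i) * (M.ΩS 1 j m' / M.ΩS 1 j j)
              * M.invSqrtT 0 s l * M.invSqrtT 1 s' l)
            * (M.X k 0 ω m s * M.X k 1 ω m' s') := by
    intro k l ω
    rw [hε 0 i, hε 1 j, Finset.sum_mul_sum]
    refine Finset.sum_congr rfl fun m _ => Finset.sum_congr rfl fun m' _ => ?_
    rw [PairedModel.Y, PairedModel.Y, Matrix.mul_apply, Matrix.mul_apply]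
    rw [mul_mul_mul_comm, Finset.sum_mul_sum, Finset.mul_sum]
    refine Finset.sum_congr rfl fun s _ => ?_
    rw [Finset.mul_sum]
    refine Finset.sum_congr rfl fun s' _ => ?_
    ring
  have hintkl : ∀ (k : Fin M.n) (l : Fin M.q),
      MeasureTheory.Integrable (fun ω => M.ε k 0 i l ω * M.ε k 1 j l ω) M.μ := by
    intro k l
    have h : MeasureTheory.Integrable (fun ω => ∑ m, ∑ m', ∑ s, ∑ s',
        ((M.ΩS 0 i m / M.ΩS 0 i i) * (M.ΩS 1 j m' / M.ΩS 1 j j)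
          * M.invSqrtT 0 s l * M.invSqrtT 1 s' l)
        * (M.X k 0 ω m s * M.X k 1 ω m' s')) M.μ :=
      MeasureTheory.integrable_finset_sum _ fun m _ =>
        MeasureTheory.integrable_finset_sum _ fun m' _ =>
          MeasureTheory.integrable_finset_sum _ fun s _ =>
            MeasureTheory.integrable_finset_sum _ fun s' _ =>
              ((hkey k m m' s s').1.const_mul _)
    exact h.congr (Filter.Eventually.of_forall fun ω => (hprod k l ω).symm)
  have hval : ∀ (k : Fin M.n) (l : Fin M.q),
      ∫ ω, M.ε k 0 i l ω * M.ε k 1 j l ω ∂M.μ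
        = ∑ m, ∑ m', ∑ s, ∑ s',
            ((M.ΩS 0 i m / M.ΩS 0 i i) * (M.ΩS 1 j m' / M.ΩS 1 j j)
              * M.invSqrtT 0 s l * M.invSqrtT 1 s' l)
            * (M.SigS12 m m' * M.SigT12 s s') := by
    intro k l
    rw [MeasureTheory.integral_congr_ae (Filter.Eventually.of_forall (hprod k l))]
    rw [MeasureTheory.integral_finset_sum _ (fun m _ =>
      MeasureTheory.integrable_finset_sum _ fun m' _ =>
        MeasureTheory.integrable_finset_sum _ fun s _ =>
          MeasureTheory.integrable_finset_sum _ fun s' _ =>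
            ((hkey k m m' s s').1.const_mul _))]
    refine Finset.sum_congr rfl fun m _ => ?_
    rw [MeasureTheory.integral_finset_sum _ (fun m' _ =>
      MeasureTheory.integrable_finset_sum _ fun s _ =>
        MeasureTheory.integrable_finset_sum _ fun s' _ =>
          ((hkey k m m' s s').1.const_mul _))]
    refine Finset.sum_congr rfl fun m' _ => ?_
    rw [MeasureTheory.integral_finset_sum _ (fun s _ =>
      MeasureTheory.integrable_finset_sum _ fun s' _ =>
        ((hkey k m m' s s').1.const_mul _))]
    refine Finset.sum_congr rfl fun s _ => ?_
    rw [MeasureTheory.integral_finset_sum _ (fun s' _ => ((hkey k m m' s s').1.const_mul _))]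
    refine Finset.sum_congr rfl fun s' _ => ?_
    rw [MeasureTheory.integral_const_mul, (hkey k m m' s s').2]
  -- compute the trace of PT12
  have htr : Matrix.trace M.PT12
      = ∑ l, ∑ s, ∑ s', M.invSqrtT 0 s l * M.invSqrtT 1 s' l * M.SigT12 s s' := by
    rw [PairedModel.PT12, Matrix.trace]
    refine Finset.sum_congr rfl fun l _ => ?_
    rw [Matrix.diag_apply, Matrix.mul_apply]
    simp only [Matrix.mul_apply, Finset.sum_mul]
    rw [Finset.sum_comm]
    refine Finset.sum_congr rfl fun s _ => Finset.sum_congr rfl fun s' _ => ?_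
    rw [hA0sym s l]
    ring
  -- the value of the inner (l-summed) expression
  have hsumval : ∀ k : Fin M.n,
      ∑ l, ∫ ω, M.ε k 0 i l ω * M.ε k 1 j l ω ∂M.μ
        = (∑ m, ∑ m', (M.ΩS 0 i m / M.ΩS 0 i i) * (M.ΩS 1 j m' / M.ΩS 1 j j) * M.SigS12 m m')
            * Matrix.trace M.PT12 := by
    intro k
    have e1 : ∑ l, ∫ ω, M.ε k 0 i l ω * M.ε k 1 j l ω ∂M.μ
        = ∑ m, ∑ m', ∑ l, ∑ s, ∑ s',
            ((M.ΩS 0 i m / M.ΩS 0 i i) * (M.ΩS 1 j m' / M.ΩS 1 j j)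
              * M.invSqrtT 0 s l * M.invSqrtT 1 s' l)
            * (M.SigS12 m m' * M.SigT12 s s') := by
      rw [Finset.sum_congr rfl fun l _ => hval k l, Finset.sum_comm]
      exact Finset.sum_congr rfl fun m _ => Finset.sum_comm
    rw [e1, Finset.sum_mul]
    refine Finset.sum_congr rfl fun m _ => ?_
    rw [Finset.sum_mul]
    refine Finset.sum_congr rfl fun m' _ => ?_
    rw [htr, Finset.mul_sum]
    refine Finset.sum_congr rfl fun l _ => ?_
    rw [Finset.mul_sum]
    refine Finset.sum_congr rfl fun s _ => ?_
    rw [Finset.mul_sum]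
    refine Finset.sum_congr rfl fun s' _ => ?_
    ring
  -- put everything together
  have hn : (M.n : ℝ) ≠ 0 := Nat.cast_ne_zero.mpr M.npos.ne'
  have hq : (M.q : ℝ) ≠ 0 := Nat.cast_ne_zero.mpr M.qpos.ne'
  have h0 : (M.ΩS 0 i i : ℝ) ≠ 0 := (hdiag 0 i).ne'
  have h1 : (M.ΩS 1 j j : ℝ) ≠ 0 := (hdiag 1 j).ne'
  have hLHS : (∫ ω, (1 / (M.n * M.q : ℝ)) * ∑ k, ∑ l, M.ε k 0 i l ω * M.ε k 1 j l ω ∂M.μ)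
      = (1 / (M.n * M.q : ℝ)) * ((M.n : ℝ) *
          ((∑ m, ∑ m', (M.ΩS 0 i m / M.ΩS 0 i i) * (M.ΩS 1 j m' / M.ΩS 1 j j) * M.SigS12 m m')
            * Matrix.trace M.PT12)) := by
    rw [MeasureTheory.integral_const_mul]
    congr 1
    rw [MeasureTheory.integral_finset_sum _ (fun k _ =>
      MeasureTheory.integrable_finset_sum _ fun l _ => hintkl k l)]
    have : ∀ k : Fin M.n, (∫ ω, ∑ l, M.ε k 0 i l ω * M.ε k 1 j l ω ∂M.μ)
        = (∑ m, ∑ m', (M.ΩS 0 i m / M.ΩS 0 i i) * (M.ΩS 1 j m' / M.ΩS 1 j j) * M.SigS12 m m')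
            * Matrix.trace M.PT12 := by
      intro k
      rw [MeasureTheory.integral_finset_sum _ (fun l _ => hintkl k l)]
      exact hsumval k
    rw [Finset.sum_congr rfl fun k _ => this k, Finset.sum_const, Finset.card_univ,
      Fintype.card_fin, nsmul_eq_mul]
  rw [hLHS]
  -- now pure algebra
  have hsq : Real.sqrt (M.r 0 i i * M.r 1 j j) * Real.sqrt (M.r 0 i i * M.r 1 j j)
      = M.r 0 i i * M.r 1 j j := by
    refine Real.mul_self_sqrt ?_
    have ha : 0 ≤ M.r 0 i i :=
      div_nonneg (hdiag 0 i).le (mul_nonneg (hdiag 0 i).le (hdiag 0 i).le)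
    have hb : 0 ≤ M.r 1 j j :=
      div_nonneg (hdiag 1 j).le (mul_nonneg (hdiag 1 j).le (hdiag 1 j).le)
    exact mul_nonneg ha hb
  rw [PairedModel.ρS12, ← mul_assoc (Real.sqrt (M.r 0 i i * M.r 1 j j)), hsq]
  have hSS : (∑ m, ∑ m', (M.ΩS 0 i m / M.ΩS 0 i i) * (M.ΩS 1 j m' / M.ΩS 1 j j) * M.SigS12 m m')
      = (M.ΩS 0 i i * M.ΩS 1 j j)⁻¹
          * ∑ a, ∑ b, M.ΩS 0 i a * M.SigS12 a b * M.ΩS 1 b j := by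
    rw [Finset.mul_sum]
    refine Finset.sum_congr rfl fun m _ => ?_
    rw [Finset.mul_sum]
    refine Finset.sum_congr rfl fun m' _ => ?_
    rw [hΩ1sym m' j]
    field_simp
  rw [hSS]
  simp only [PairedModel.r]
  field_simp

end
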